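/- If two bounded Borda-count perturbations satisfy |BC'(τ) − BC(τ)| ≤ ε for all τ in a finite set T (which holds whenever BC' = (1−ε)·BC + ε·B̃C with BC, B̃C taking values in [0,1]), then the KL divergence between the Gibbs distributions with temperature α > 0 induced by BC and BC' is at most ε²/(2α²). -/

import Mathlib

open Finset

section aux

lemma upos (θ : ℝ) (hθ0 : 0 ≤ θ) (hθ1 : θ ≤ 1) (x : ℝ) :
    0 < 1 - θ + θ * Real.exp x := by
  nlinarith [Real.exp_pos x, mul_nonneg hθ0 (Real.exp_pos x).le]

-- key calculus lemma (Hoeffding core)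
lemma key (θ : ℝ) (hθ0 : 0 ≤ θ) (hθ1 : θ ≤ 1) (h : ℝ) (hh : 0 ≤ h) :
    -θ * h + Real.log (1 - θ + θ * Real.exp h) ≤ h ^ 2 / 8 := by
  set u : ℝ → ℝ := fun x => 1 - θ + θ * Real.exp x with hu
  have hupos : ∀ x, 0 < u x := upos θ hθ0 hθ1
  have hud : ∀ x, HasDerivAt u (θ * Real.exp x) x := fun x =>
    ((Real.hasDerivAt_exp x).const_mul θ).const_add (1 - θ)
  set G : ℝ → ℝ := fun x => x / 4 + θ - θ * Real.exp x / u x with hG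
  have hGd : ∀ x, HasDerivAt G (1 / 4 - θ * (1 - θ) * Real.exp x / (u x) ^ 2) x := by
    intro x
    have h1 : HasDerivAt (fun x => θ * Real.exp x) (θ * Real.exp x) x :=
      (Real.hasDerivAt_exp x).const_mul θ
    have h2 : HasDerivAt (fun x => θ * Real.exp x / u x)
        ((θ * Real.exp x * u x - θ * Real.exp x * (θ * Real.exp x)) / (u x) ^ 2) x :=
      h1.div (hud x) (hupos x).ne'
    have h3 : HasDerivAt (fun x => x / 4 + θ) (1 / 4) x := by
      simpa using ((hasDerivAt_id x).div_const 4).add_const θ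
    have := h3.sub h2
    refine this.congr_deriv ?_
    have : u x = 1 - θ + θ * Real.exp x := rfl
    rw [this]
    ring
  have hGmono : Monotone G := by
    apply monotone_of_deriv_nonneg
    · exact fun x => (hGd x).differentiableAt
    · intro x
      rw [(hGd x).deriv]
      have h4 : θ * (1 - θ) * Real.exp x / (u x) ^ 2 ≤ 1 / 4 := by
        rw [div_le_iff₀ (pow_pos (hupos x) 2)]
        have : u x = 1 - θ + θ * Real.exp x := rfl
        nlinarith [Real.exp_pos x, sq_nonneg ((1 - θ) - θ * Real.exp x)]
      linarith
  have hG0 : G 0 = 0 := by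
    simp [hG, hu]
  have hGnn : ∀ x, 0 ≤ x → 0 ≤ G x := by
    intro x hx
    have := hGmono hx
    rw [hG0] at this
    exact this
  set g : ℝ → ℝ := fun x => x ^ 2 / 8 + θ * x - Real.log (u x) with hg
  have hgd : ∀ x, HasDerivAt g (G x) x := by
    intro x
    have h1 : HasDerivAt (fun x : ℝ => x ^ 2 / 8 + θ * x)
        (2 * x / 8 + θ) x := by
      have := ((hasDerivAt_pow 2 x).div_const 8).add ((hasDerivAt_id x).const_mul θ)
      refine this.congr_deriv ?_
      norm_num
    have h2 : HasDerivAt (fun x => Real.log (u x)) (θ * Real.exp x / u x) x :=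
      (hud x).log (hupos x).ne'
    have := h1.sub h2
    refine this.congr_deriv ?_
    show _ = x / 4 + θ - θ * Real.exp x / u x
    ring
  have hgmono : MonotoneOn g (Set.Ici 0) := by
    apply monotoneOn_of_deriv_nonneg (convex_Ici 0)
    · exact (Differentiable.continuous (fun x => (hgd x).differentiableAt)).continuousOn
    · intro x _
      exact (hgd x).differentiableAt.differentiableWithinAt
    · intro x hx
      rw [(hgd x).deriv]
      exact hGnn x (le_of_lt (by simpa using hx))
  have hg0 : g 0 = 0 := by simp [hg, hu]
  have := hgmono (Set.self_mem_Ici) (Set.mem_Ici.mpr hh) hh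
  rw [hg0] at this
  simp only [hg] at this
  have hlog := this
  nlinarith [hlog]


lemma chord (a b x : ℝ) (hab : a < b) (hax : a ≤ x) (hxb : x ≤ b) :
    Real.exp x ≤ ((b - x) * Real.exp a + (x - a) * Real.exp b) / (b - a) := by
  have hba : (0:ℝ) < b - a := by linarith
  have w1 : (0:ℝ) ≤ (b - x) / (b - a) := div_nonneg (by linarith) hba.le
  have w2 : (0:ℝ) ≤ (x - a) / (b - a) := div_nonneg (by linarith) hba.le
  have hsum : (b - x) / (b - a) + (x - a) / (b - a) = 1 := by field_simp; ring
  have := convexOn_exp.2 (Set.mem_univ a) (Set.mem_univ b) w1 w2 hsum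
  have hx : (b - x) / (b - a) * a + (x - a) / (b - a) * b = x := by field_simp; ring
  rw [smul_eq_mul, smul_eq_mul, hx] at this
  calc Real.exp x ≤ (b - x) / (b - a) * Real.exp a + (x - a) / (b - a) * Real.exp b := this
    _ = ((b - x) * Real.exp a + (x - a) * Real.exp b) / (b - a) := by ring


lemma keyexp (θ : ℝ) (hθ0 : 0 ≤ θ) (hθ1 : θ ≤ 1) (h : ℝ) (hh : 0 ≤ h) :
    Real.exp (-θ * h) * (1 - θ + θ * Real.exp h) ≤ Real.exp (h ^ 2 / 8) := by
  have hu : 0 < 1 - θ + θ * Real.exp h := by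
    nlinarith [Real.exp_pos h, mul_nonneg hθ0 (Real.exp_pos h).le]
  have : Real.exp (-θ * h) * (1 - θ + θ * Real.exp h)
      = Real.exp (-θ * h + Real.log (1 - θ + θ * Real.exp h)) := by
    rw [Real.exp_add, Real.exp_log hu]
  rw [this]
  exact Real.exp_le_exp.mpr (key θ hθ0 hθ1 h hh)

-- chord value bound: a ≤ 0 ≤ b, a < b
lemma chordval (a b : ℝ) (ha : a ≤ 0) (hb : 0 ≤ b) (hab : a < b) :
    (b * Real.exp a - a * Real.exp b) / (b - a) ≤ Real.exp ((b - a) ^ 2 / 8) := by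
  set h := b - a with hh
  have hh0 : 0 < h := by simp [hh]; linarith
  set θ := -a / h with hθ
  have hθ0 : 0 ≤ θ := div_nonneg (by linarith) hh0.le
  have hθ1 : θ ≤ 1 := by
    rw [hθ, div_le_one hh0]; simp [hh]; linarith
  have ha' : a = -θ * h := by rw [hθ]; field_simp
  have hb' : b = (1 - θ) * h := by rw [hθ]; field_simp [hh]; linarith
  have hkey := keyexp θ hθ0 hθ1 h hh0.le
  have expand : (b * Real.exp a - a * Real.exp b) / (b - a)
      = Real.exp (-θ * h) * (1 - θ + θ * Real.exp h) := by
    rw [← hh]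
    rw [div_eq_iff hh0.ne']
    rw [ha', hb']
    have : Real.exp ((1 - θ) * h) = Real.exp (-θ * h) * Real.exp h := by
      rw [← Real.exp_add]; ring_nf
    rw [this]
    ring
  rw [expand]
  exact hkey

lemma hoeff {T : Type*} [Fintype T] (p X : T → ℝ) (hp0 : ∀ τ, 0 ≤ p τ)
    (hp1 : ∑ τ : T, p τ = 1) (c : ℝ) (hc : 0 < c) (hX : ∀ τ, |X τ| ≤ c) :
    ∑ τ : T, p τ * Real.exp (X τ) ≤ Real.exp ((∑ τ : T, p τ * X τ) + c ^ 2 / 2) := by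
  set m := ∑ τ : T, p τ * X τ with hm
  have hmle : |m| ≤ c := by
    rw [hm]
    calc |∑ τ : T, p τ * X τ| ≤ ∑ τ : T, |p τ * X τ| := Finset.abs_sum_le_sum_abs _ _
      _ ≤ ∑ τ : T, p τ * c := by
          apply Finset.sum_le_sum
          intro τ _
          rw [abs_mul, abs_of_nonneg (hp0 τ)]
          exact mul_le_mul_of_nonneg_left (hX τ) (hp0 τ)
      _ = c := by rw [← Finset.sum_mul, hp1, one_mul]
  set a := -c - m with ha
  set b := c - m with hb
  have hab : a < b := by simp [ha, hb]; linarith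
  have ha0 : a ≤ 0 := by
    have := abs_le.mp hmle; simp [ha]; linarith [this.1]
  have hb0 : 0 ≤ b := by
    have := abs_le.mp hmle; simp [hb]; linarith [this.2]
  -- pointwise chord bound for Y τ = X τ - m
  have step1 : ∑ τ : T, p τ * Real.exp (X τ - m)
      ≤ (b * Real.exp a - a * Real.exp b) / (b - a) := by
    have : ∑ τ : T, p τ * Real.exp (X τ - m)
        ≤ ∑ τ : T, p τ * (((b - (X τ - m)) * Real.exp a + ((X τ - m) - a) * Real.exp b) / (b - a)) := by
      apply Finset.sum_le_sum
      intro τ _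
      apply mul_le_mul_of_nonneg_left _ (hp0 τ)
      apply chord a b _ hab
      · have := abs_le.mp (hX τ); simp [ha]; linarith [this.1]
      · have := abs_le.mp (hX τ); simp [hb]; linarith [this.2]
    refine this.trans (le_of_eq ?_)
    have hba : b - a ≠ 0 := by intro hcon; linarith [hab]
    have expand : ∀ τ, p τ * (((b - (X τ - m)) * Real.exp a + ((X τ - m) - a) * Real.exp b) / (b - a))
        = (p τ * b - (p τ * X τ - p τ * m)) * (Real.exp a / (b - a))
          + ((p τ * X τ - p τ * m) - p τ * a) * (Real.exp b / (b - a)) := by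
      intro τ; field_simp
    rw [Finset.sum_congr rfl (fun τ _ => expand τ)]
    rw [Finset.sum_add_distrib, ← Finset.sum_mul, ← Finset.sum_mul]
    have e1 : ∑ τ : T, (p τ * b - (p τ * X τ - p τ * m)) = b := by
      rw [Finset.sum_sub_distrib, Finset.sum_sub_distrib, ← Finset.sum_mul,
        ← Finset.sum_mul, hp1, ← hm]
      ring
    have e2 : ∑ τ : T, ((p τ * X τ - p τ * m) - p τ * a) = -a := by
      rw [Finset.sum_sub_distrib, Finset.sum_sub_distrib, ← Finset.sum_mul,
        ← Finset.sum_mul, hp1, ← hm]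
      ring
    rw [e1, e2]
    field_simp
    ring
  have step2 := chordval a b ha0 hb0 hab
  have hba : b - a = 2 * c := by simp [ha, hb]; ring
  rw [hba] at step2
  have hc2 : (2 * c) ^ 2 / 8 = c ^ 2 / 2 := by ring
  rw [hc2] at step2
  -- combine
  rw [hba] at step1
  have key2 : ∑ τ : T, p τ * Real.exp (X τ - m) ≤ Real.exp (c ^ 2 / 2) := step1.trans step2
  have rewrite : ∑ τ : T, p τ * Real.exp (X τ)
      = Real.exp m * ∑ τ : T, p τ * Real.exp (X τ - m) := by
    rw [Finset.mul_sum]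
    apply Finset.sum_congr rfl
    intro τ _
    rw [show Real.exp m * (p τ * Real.exp (X τ - m))
        = p τ * (Real.exp m * Real.exp (X τ - m)) by ring, ← Real.exp_add]
    ring_nf
  rw [rewrite, Real.exp_add]
  exact mul_le_mul_of_nonneg_left key2 (Real.exp_pos m).le

end aux

noncomputable def gibbs {T : Type*} [Fintype T] (f : T → ℝ) (α : ℝ) (τ : T) : ℝ :=
  Real.exp (f τ / α) / ∑ τ' : T, Real.exp (f τ' / α)

theorem stmt_18 {T : Type*} [Fintype T] [Nonempty T]
    (BC BC' : T → ℝ) (ε α : ℝ) (hα : 0 < α)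
    (hbound : ∀ τ, |BC' τ - BC τ| ≤ ε) :
    ∑ τ : T, gibbs BC α τ * Real.log (gibbs BC α τ / gibbs BC' α τ) ≤
      ε ^ 2 / (2 * α ^ 2) := by
  have hε0 : 0 ≤ ε := le_trans (abs_nonneg _) (hbound (Classical.arbitrary T))
  rcases eq_or_lt_of_le hε0 with hε | hε
  · -- ε = 0 : BC' = BC
    have hBC : BC' = BC := by
      funext τ
      have := hbound τ
      rw [← hε] at this
      have := abs_nonpos_iff.mp this
      linarith [sub_eq_zero.mp this]
    rw [hBC]
    have : ∀ τ : T, gibbs BC α τ * Real.log (gibbs BC α τ / gibbs BC α τ) = 0 := by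
      intro τ
      rcases eq_or_ne (gibbs BC α τ) 0 with h | h
      · simp [h]
      · rw [div_self h, Real.log_one, mul_zero]
    rw [Finset.sum_congr rfl (fun τ _ => this τ), Finset.sum_const_zero]
    positivity
  · -- ε > 0
    set Z : ℝ := ∑ τ' : T, Real.exp (BC τ' / α) with hZ
    set Z' : ℝ := ∑ τ' : T, Real.exp (BC' τ' / α) with hZ'
    have hZpos : 0 < Z :=
      Finset.sum_pos (fun τ _ => Real.exp_pos _) Finset.univ_nonempty
    have hZ'pos : 0 < Z' :=
      Finset.sum_pos (fun τ _ => Real.exp_pos _) Finset.univ_nonempty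
    set p : T → ℝ := gibbs BC α with hp
    set X : T → ℝ := fun τ => (BC' τ - BC τ) / α with hX
    have hp0 : ∀ τ, 0 ≤ p τ := by
      intro τ
      simp only [hp, gibbs, ← hZ]
      positivity
    have hp1 : ∑ τ : T, p τ = 1 := by
      simp only [hp, gibbs, ← hZ]
      rw [← Finset.sum_div, ← hZ, div_self hZpos.ne']
    set c : ℝ := ε / α with hc
    have hcpos : 0 < c := div_pos hε hα
    have hXb : ∀ τ, |X τ| ≤ c := by
      intro τ
      simp only [hX, hc, abs_div, abs_of_pos hα]
      exact div_le_div_of_nonneg_right (hbound τ) hα.le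
    -- ratio identity
    have hratio : ∀ τ, gibbs BC α τ / gibbs BC' α τ = Real.exp (-X τ) * (Z' / Z) := by
      intro τ
      have hexp : Real.exp (-X τ) = Real.exp (BC τ / α) / Real.exp (BC' τ / α) := by
        rw [← Real.exp_sub]
        congr 1
        simp only [hX]
        field_simp
        ring
      simp only [gibbs, ← hZ, ← hZ']
      rw [div_div_div_comm, ← hexp, div_div_eq_mul_div, mul_div_assoc]
    have hlogterm : ∀ τ, Real.log (gibbs BC α τ / gibbs BC' α τ)
        = -X τ + Real.log (Z' / Z) := by
      intro τ
      rw [hratio τ, Real.log_mul (Real.exp_ne_zero _) (by positivity), Real.log_exp]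
    set m : ℝ := ∑ τ : T, p τ * X τ with hm
    have hsum : ∑ τ : T, gibbs BC α τ * Real.log (gibbs BC α τ / gibbs BC' α τ)
        = -m + Real.log (Z' / Z) := by
      rw [Finset.sum_congr rfl (fun τ _ => by rw [hlogterm τ])]
      have : ∀ τ : T, p τ * (-X τ + Real.log (Z' / Z))
          = -(p τ * X τ) + p τ * Real.log (Z' / Z) := fun τ => by ring
      rw [show (fun τ => gibbs BC α τ * (-X τ + Real.log (Z'/Z)))
          = fun τ => p τ * (-X τ + Real.log (Z'/Z)) from rfl]
      rw [Finset.sum_congr rfl (fun τ _ => this τ), Finset.sum_add_distrib,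
        Finset.sum_neg_distrib, ← hm, ← Finset.sum_mul, hp1, one_mul]
    -- Z'/Z = ∑ p * exp X
    have hZZ : Z' / Z = ∑ τ : T, p τ * Real.exp (X τ) := by
      rw [hZ', eq_comm]
      have : ∀ τ : T, p τ * Real.exp (X τ) = Real.exp (BC' τ / α) / Z := by
        intro τ
        simp only [hp, gibbs, ← hZ]
        rw [div_mul_eq_mul_div, ← Real.exp_add]
        congr 2
        simp only [hX]
        field_simp
        ring
      rw [Finset.sum_congr rfl (fun τ _ => this τ), ← Finset.sum_div]
    have hhoeff := hoeff p X hp0 hp1 c hcpos hXb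
    have hSpos : 0 < ∑ τ : T, p τ * Real.exp (X τ) := by
      rw [← hZZ]; positivity
    have hlog : Real.log (Z' / Z) ≤ m + c ^ 2 / 2 := by
      rw [hZZ]
      rw [Real.log_le_iff_le_exp hSpos]
      exact hhoeff.trans_eq (by rw [← hm])
    rw [hsum]
    have : -m + Real.log (Z' / Z) ≤ c ^ 2 / 2 := by linarith
    refine this.trans (le_of_eq ?_)
    simp only [hc]
    field_simp
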